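/- There exists c > 0 such that for every y > 0, every real x with |x| > 2, |φ_x(iy) − iy|² ≤ c/(x² + y²). -/

import Mathlib

noncomputable def upperSqrt (w : ℂ) : ℂ :=
  if 0 < (w ^ (1/2 : ℂ)).im then w ^ (1/2 : ℂ) else -(w ^ (1/2 : ℂ))

noncomputable def slitMap (x : ℝ) (z : ℂ) : ℂ :=
  (x : ℂ) + upperSqrt ((z - (x : ℂ)) ^ 2 - 1)

lemma upperSqrt_sq {w : ℂ} (hw : w ≠ 0) : (upperSqrt w) ^ 2 = w := by
  have h : (w ^ (1/2 : ℂ)) ^ 2 = w := by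
    rw [sq, ← Complex.cpow_add _ _ hw]
    norm_num
  unfold upperSqrt
  split <;> simpa using h

lemma upperSqrt_im_nonneg (w : ℂ) : 0 ≤ (upperSqrt w).im := by
  unfold upperSqrt
  split_ifs with h
  · linarith
  · push_neg at h
    simpa using h

theorem slitMap_far_field :
    ∃ c > (0 : ℝ), ∀ (y : ℝ), 0 < y → ∀ (x : ℝ), 2 < |x| →
      (‖slitMap x (Complex.I * y) - Complex.I * y‖) ^ 2
        ≤ c / (x ^ 2 + y ^ 2) := by
  refine ⟨2, by norm_num, ?_⟩
  intro y hy x hx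
  have hx0 : x ≠ 0 := by
    intro h; rw [h] at hx; simp at hx; linarith
  set W : ℂ := Complex.I * y - x with hWdef
  have hReW : W.re = -x := by simp [hWdef]
  have hImW : W.im = y := by simp [hWdef]
  have hW2im : (W ^ 2 - 1).im = -(2 * x * y) := by
    simp [sq, Complex.sub_im, Complex.mul_im, hReW, hImW]; ring
  have hne : W ^ 2 - 1 ≠ 0 := by
    intro h
    rw [h] at hW2im
    simp at hW2im
    rcases hW2im with h1 | h1
    · exact hx0 h1
    · linarith
  set s : ℂ := upperSqrt (W ^ 2 - 1) with hsdef
  have hsq : s ^ 2 = W ^ 2 - 1 := upperSqrt_sq hne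
  have hsim0 : 0 ≤ s.im := upperSqrt_im_nonneg _
  have hprod : s.re * s.im = -(x * y) := by
    have h1 : (s ^ 2).im = -(2 * x * y) := by rw [hsq]; exact hW2im
    simp [sq, Complex.mul_im] at h1
    linarith
  have hsim : 0 < s.im := by
    rcases lt_or_eq_of_le hsim0 with h | h
    · exact h
    · exfalso
      rw [← h] at hprod
      simp at hprod
      rcases hprod with h1 | h1
      · exact hx0 h1
      · linarith
  have hx2 : 0 < x ^ 2 := by positivity
  have key : s.re * x * s.im = -(x ^ 2 * y) := by linear_combination x * hprod
  have hsignx : s.re * x < 0 := by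
    by_contra h
    push_neg at h
    nlinarith [mul_nonneg h hsim.le]
  -- norms
  have hB : x ^ 2 + y ^ 2 ≤ 2 * Complex.normSq (s + W) := by
    have h1 : Complex.normSq (s + W) = (s.re - x) ^ 2 + (s.im + y) ^ 2 := by
      simp [Complex.normSq_apply, Complex.add_re, Complex.add_im, hReW, hImW]
      ring
    nlinarith [sq_nonneg s.re, sq_nonneg s.im]
  have hmul : (s - W) * (s + W) = -1 := by
    have : (s - W) * (s + W) = s ^ 2 - W ^ 2 := by ring
    rw [this, hsq]; ring
  have habs : Complex.normSq (s - W) * Complex.normSq (s + W) = 1 := by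
    rw [← Complex.normSq_mul, hmul]
    simp
  have hgoal : slitMap x (Complex.I * y) - Complex.I * y = s - W := by
    simp only [slitMap, hsdef, hWdef]
    ring
  rw [hgoal, Complex.sq_norm]
  have hpos : 0 < x ^ 2 + y ^ 2 := by positivity
  rw [le_div_iff₀ hpos]
  nlinarith [Complex.normSq_nonneg (s - W), Complex.normSq_nonneg (s + W)]
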